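/- For (a,b,c) ∈ ℂ³ let f_{(a,b,c)}(x,y,z) = 3a(b²−c²)·x²yz + 3b(c²−a²)·xy²z + 3c(a²−b²)·xyz² + a³·yz(y²−z²) − b³·xz(x²−z²) + c³·xy(x²−y²) be the unexpected quartic of the B₃ configuration. Then the unexpected quartic at a general point is irreducible: there exists a nonzero polynomial h ∈ ℂ[a,b,c] such that for all (a,b,c) ∈ ℂ³ with h(a,b,c) ≠ 0, the polynomial f_{(a,b,c)} is irreducible in ℂ[x,y,z]. -/

import Mathlib

open MvPolynomial

/-- The unexpected quartic of the B₃ configuration associated to (a,b,c). -/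
noncomputable def unexpQuartic (a b c : ℂ) : MvPolynomial (Fin 3) ℂ :=
  C (3 * a * (b ^ 2 - c ^ 2)) * (X 0 ^ 2 * X 1 * X 2)
  + C (3 * b * (c ^ 2 - a ^ 2)) * (X 0 * X 1 ^ 2 * X 2)
  + C (3 * c * (a ^ 2 - b ^ 2)) * (X 0 * X 1 * X 2 ^ 2)
  + C (a ^ 3) * (X 1 * X 2 * (X 1 ^ 2 - X 2 ^ 2))
  - C (b ^ 3) * (X 0 * X 2 * (X 0 ^ 2 - X 2 ^ 2))
  + C (c ^ 3) * (X 0 * X 1 * (X 0 ^ 2 - X 1 ^ 2))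

noncomputable def subst3 (a b c : ℂ) : MvPolynomial (Fin 3) ℂ →ₐ[ℂ] MvPolynomial (Fin 3) ℂ :=
  aeval ![C a * X 0, C b * X 0 + X 1, C c * X 0 + X 2]

noncomputable def unsubst3 (a b c : ℂ) : MvPolynomial (Fin 3) ℂ →ₐ[ℂ] MvPolynomial (Fin 3) ℂ :=
  aeval ![C a⁻¹ * X 0, X 1 - C (b * a⁻¹) * X 0, X 2 - C (c * a⁻¹) * X 0]

noncomputable def substEquiv (a b c : ℂ) (ha : a ≠ 0) :
    MvPolynomial (Fin 3) ℂ ≃ₐ[ℂ] MvPolynomial (Fin 3) ℂ := by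
  have hu : C a * C a⁻¹ = (1 : MvPolynomial (Fin 3) ℂ) := by
    rw [← C_mul, mul_inv_cancel₀ ha, C_1]
  refine AlgEquiv.ofAlgHom (subst3 a b c) (unsubst3 a b c) ?_ ?_ <;>
    apply MvPolynomial.algHom_ext <;> intro i <;> fin_cases i <;>
      simp only [subst3, unsubst3, AlgHom.coe_comp, Function.comp_apply, AlgHom.coe_id,
        id_eq, map_mul, map_add, map_sub, aeval_X, aeval_C, algebraMap_eq, C_mul,
        Matrix.cons_val_zero, Matrix.cons_val_one, Matrix.head_cons, Matrix.cons_val_succ,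
        Fin.isValue, Fin.mk_zero, Fin.mk_one, Fin.reduceFinMk, Matrix.cons_val_two,
        Matrix.tail_cons]
  · linear_combination (X 0 : MvPolynomial (Fin 3) ℂ) * hu
  · linear_combination (-(C b * X 0) : MvPolynomial (Fin 3) ℂ) * hu
  · linear_combination (-(C c * X 0) : MvPolynomial (Fin 3) ℂ) * hu
  · linear_combination (X 0 : MvPolynomial (Fin 3) ℂ) * hu
  · ring
  · ring

theorem substEquiv_apply (a b c : ℂ) (ha : a ≠ 0) (p : MvPolynomial (Fin 3) ℂ) :
    substEquiv a b c ha p = aeval ![C a * X 0, C b * X 0 + X 1, C c * X 0 + X 2] p := rfl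

noncomputable def pPoly (a b c : ℂ) : MvPolynomial (Fin 2) ℂ :=
  C (a ^ 3 * c - a * c ^ 3) * X 0 ^ 3 + C (3 * a * b * c ^ 2) * (X 0 ^ 2 * X 1)
    - C (3 * a * b ^ 2 * c) * (X 0 * X 1 ^ 2) + C (a * b ^ 3 - a ^ 3 * b) * X 1 ^ 3

noncomputable def qPoly (a : ℂ) : MvPolynomial (Fin 2) ℂ :=
  C (a ^ 3) * (X 0 ^ 3 * X 1 - X 0 * X 1 ^ 3)

theorem fse_X1 : (finSuccEquiv ℂ 2) (X 1 : MvPolynomial (Fin 3) ℂ) = Polynomial.C (X 0) := by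
  have := MvPolynomial.finSuccEquiv_X_succ (R := ℂ) (n := 2) (j := (0 : Fin 2))
  simpa using this

theorem fse_X2 : (finSuccEquiv ℂ 2) (X 2 : MvPolynomial (Fin 3) ℂ) = Polynomial.C (X 1) := by
  have := MvPolynomial.finSuccEquiv_X_succ (R := ℂ) (n := 2) (j := (1 : Fin 2))
  simpa using this

theorem fse_C (r : ℂ) : (finSuccEquiv ℂ 2) (C r : MvPolynomial (Fin 3) ℂ)
    = Polynomial.C (C r) := by
  simp [MvPolynomial.finSuccEquiv_apply]

theorem key_eq (a b c : ℂ) :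
    (finSuccEquiv ℂ 2) ((aeval ![C a * X 0, C b * X 0 + X 1, C c * X 0 + X 2] :
        MvPolynomial (Fin 3) ℂ →ₐ[ℂ] MvPolynomial (Fin 3) ℂ) (unexpQuartic a b c))
      = Polynomial.C (pPoly a b c) * Polynomial.X + Polynomial.C (qPoly a) := by
  simp only [unexpQuartic, pPoly, qPoly, map_add, map_sub, map_mul, map_pow, aeval_X, aeval_C,
    algebraMap_eq, Matrix.cons_val_zero, Matrix.cons_val_one, Matrix.head_cons,
    Matrix.cons_val_succ, Matrix.cons_val_two, Matrix.tail_cons, Fin.isValue,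
    MvPolynomial.finSuccEquiv_X_zero, fse_X1, fse_X2, fse_C, C_mul, C_sub, C_add, C_pow,
    map_ofNat]
  ring

theorem prime_equiv {M N : Type*} [CommMonoidWithZero M] [CommMonoidWithZero N]
    (e : M ≃* N) {p : M} (h : Prime (e p)) : Prime p := (MulEquiv.prime_iff e).mp h

theorem prime_X0 : Prime (X 0 : MvPolynomial (Fin 2) ℂ) := by
  apply prime_equiv (finSuccEquiv ℂ 1).toRingEquiv.toMulEquiv
  show Prime ((finSuccEquiv ℂ 1) (X 0))
  rw [MvPolynomial.finSuccEquiv_X_zero]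
  exact Polynomial.prime_X

theorem prime_X1 : Prime (X 1 : MvPolynomial (Fin 2) ℂ) := by
  have h : (renameEquiv ℂ (Equiv.swap (0 : Fin 2) 1)) (X 0) = (X 1 : MvPolynomial (Fin 2) ℂ) := by
    simp
  have := (MulEquiv.prime_iff (renameEquiv ℂ (Equiv.swap (0 : Fin 2) 1)).toRingEquiv.toMulEquiv).mpr prime_X0
  rw [show ((renameEquiv ℂ (Equiv.swap (0 : Fin 2) 1)).toRingEquiv.toMulEquiv) (X 0 : MvPolynomial (Fin 2) ℂ) = (renameEquiv ℂ (Equiv.swap (0 : Fin 2) 1)) (X 0 : MvPolynomial (Fin 2) ℂ) from rfl, h] at this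
  exact this

noncomputable def shearEquiv : MvPolynomial (Fin 2) ℂ ≃ₐ[ℂ] MvPolynomial (Fin 2) ℂ := by
  refine AlgEquiv.ofAlgHom (aeval ![X 0 + X 1, X 1]) (aeval ![X 0 - X 1, X 1]) ?_ ?_ <;>
    apply MvPolynomial.algHom_ext <;> intro i <;> fin_cases i <;>
      simp [Matrix.cons_val_zero, Matrix.cons_val_one, Matrix.head_cons]

theorem prime_add : Prime (X 0 + X 1 : MvPolynomial (Fin 2) ℂ) := by
  have h : shearEquiv (X 0) = (X 0 + X 1 : MvPolynomial (Fin 2) ℂ) := by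
    simp [shearEquiv, AlgEquiv.ofAlgHom]
  have := (MulEquiv.prime_iff shearEquiv.toRingEquiv.toMulEquiv).mpr prime_X0
  rw [show (shearEquiv.toRingEquiv.toMulEquiv) (X 0 : MvPolynomial (Fin 2) ℂ) = shearEquiv (X 0 : MvPolynomial (Fin 2) ℂ) from rfl, h] at this
  exact this

theorem prime_sub : Prime (X 0 - X 1 : MvPolynomial (Fin 2) ℂ) := by
  have h : shearEquiv.symm (X 0) = (X 0 - X 1 : MvPolynomial (Fin 2) ℂ) := by
    simp [shearEquiv, AlgEquiv.ofAlgHom]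
  have := (MulEquiv.prime_iff shearEquiv.symm.toRingEquiv.toMulEquiv).mpr prime_X0
  rw [show (shearEquiv.symm.toRingEquiv.toMulEquiv) (X 0 : MvPolynomial (Fin 2) ℂ) = shearEquiv.symm (X 0 : MvPolynomial (Fin 2) ℂ) from rfl, h] at this
  exact this

theorem linear_irred {p q : MvPolynomial (Fin 2) ℂ} (hp : p ≠ 0)
    (H : ∀ r : MvPolynomial (Fin 2) ℂ, r ∣ p → r ∣ q → IsUnit r) :
    Irreducible (Polynomial.C p * Polynomial.X + Polynomial.C q) := by
  have hdeg : (Polynomial.C p * Polynomial.X + Polynomial.C q).natDegree = 1 :=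
    Polynomial.natDegree_linear hp
  have hg0 : (Polynomial.C p * Polynomial.X + Polynomial.C q) ≠ 0 := by
    intro h; rw [h] at hdeg; simp at hdeg
  constructor
  · intro hu
    have := Polynomial.natDegree_eq_zero_of_isUnit hu
    omega
  · intro u v huv
    have hu0 : u ≠ 0 := by rintro rfl; rw [zero_mul] at huv; exact hg0 huv
    have hv0 : v ≠ 0 := by rintro rfl; rw [mul_zero] at huv; exact hg0 huv
    have hsum : u.natDegree + v.natDegree = 1 := by
      rw [← Polynomial.natDegree_mul hu0 hv0, ← huv, hdeg]
    have hcase : u.natDegree = 0 ∨ v.natDegree = 0 := by omega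
    rcases hcase with h0 | h0
    · left
      obtain ⟨r, hr⟩ := Polynomial.natDegree_eq_zero.mp h0
      rw [← hr, Polynomial.isUnit_C]
      have hc1 := congrArg (fun w => Polynomial.coeff w 1) huv
      have hc0 := congrArg (fun w => Polynomial.coeff w 0) huv
      simp only [← hr, Polynomial.coeff_add, Polynomial.coeff_C_mul, Polynomial.coeff_X_one,
        Polynomial.coeff_X_zero, Polynomial.coeff_C, mul_one, mul_zero, add_zero, zero_add,
        if_true, if_false, one_ne_zero, reduceIte] at hc1 hc0
      exact H r ⟨v.coeff 1, hc1⟩ ⟨v.coeff 0, hc0⟩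
    · right
      obtain ⟨r, hr⟩ := Polynomial.natDegree_eq_zero.mp h0
      rw [← hr, Polynomial.isUnit_C]
      have hc1 := congrArg (fun w => Polynomial.coeff w 1) huv
      have hc0 := congrArg (fun w => Polynomial.coeff w 0) huv
      simp only [← hr, Polynomial.coeff_add, Polynomial.coeff_mul_C, Polynomial.coeff_C_mul,
        Polynomial.coeff_X_one, Polynomial.coeff_X_zero, Polynomial.coeff_C, mul_one, mul_zero,
        add_zero, zero_add, if_true, if_false, one_ne_zero, reduceIte] at hc1 hc0
      exact H r ⟨u.coeff 1, by rw [hc1, mul_comm]⟩ ⟨u.coeff 0, by rw [hc0, mul_comm]⟩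

theorem key_irred (a b c : ℂ) (ha : a ≠ 0) (hb : b ≠ 0) (hc : c ≠ 0)
    (hab : a ^ 2 - b ^ 2 ≠ 0) (hbc : b ^ 2 - c ^ 2 ≠ 0) (hca : c ^ 2 - a ^ 2 ≠ 0)
    (h1 : a + b + c ≠ 0) (h2 : a + b - c ≠ 0) (h3 : a - b + c ≠ 0) (h4 : a - b - c ≠ 0) :
    Irreducible (unexpQuartic a b c) := by
  -- nonvanishing of p
  have hp0 : pPoly a b c ≠ 0 := by
    intro h
    have heval := congrArg (eval ![(1 : ℂ), 0]) h
    simp [pPoly] at heval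
    have h' : a * c * (c ^ 2 - a ^ 2) = 0 := by linear_combination -heval
    exact mul_ne_zero (mul_ne_zero ha hc) hca h'
  -- the coprimality condition
  have H : ∀ r : MvPolynomial (Fin 2) ℂ, r ∣ pPoly a b c → r ∣ qPoly a → IsUnit r := by
    intro r hrp hrq
    by_contra hru
    have hr0 : r ≠ 0 := by rintro rfl; exact hp0 (zero_dvd_iff.mp hrp)
    obtain ⟨π, hπi, hπr⟩ := WfDvdMonoid.exists_irreducible_factor hru hr0
    have hπ : Prime π := (UniqueFactorizationMonoid.irreducible_iff_prime).mp hπi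
    have hqfac : qPoly a
        = C (a ^ 3) * (X 0 * (X 1 * ((X 0 - X 1) * (X 0 + X 1)))) := by
      rw [qPoly]; ring
    have hπq : π ∣ C (a ^ 3) * (X 0 * (X 1 * ((X 0 - X 1) * (X 0 + X 1)))) :=
      hqfac ▸ (hπr.trans hrq)
    -- any irreducible ℓ with π ∣ ℓ must divide p
    have hdvd_p : ∀ ℓ : MvPolynomial (Fin 2) ℂ, Irreducible ℓ → π ∣ ℓ → ℓ ∣ pPoly a b c := by
      rintro ℓ hℓ ⟨w, hw⟩
      rcases hℓ.isUnit_or_isUnit hw with h | h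
      · exact absurd h hπ.not_isUnit
      · obtain ⟨w', hw'⟩ := isUnit_iff_exists_inv.mp h
        have hlπ : ℓ ∣ π := ⟨w', by rw [hw, mul_assoc, hw', mul_one]⟩
        exact hlπ.trans (hπr.trans hrp)
    -- evaluation-based contradictions
    have hzero : ∀ ℓ : MvPolynomial (Fin 2) ℂ, ℓ ∣ pPoly a b c →
        ∀ v : Fin 2 → ℂ, eval v ℓ = 0 → eval v (pPoly a b c) = 0 := by
      rintro ℓ ⟨t, ht⟩ v hv
      rw [ht, map_mul, hv, zero_mul]
    rcases hπ.dvd_mul.mp hπq with hd | hd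
    · have hCu : IsUnit (C (a ^ 3) : MvPolynomial (Fin 2) ℂ) :=
        IsUnit.of_mul_eq_one (C (a ^ 3)⁻¹) (by
          rw [← C_mul, mul_inv_cancel₀ (pow_ne_zero 3 ha), C_1])
      exact hπ.not_isUnit (isUnit_of_dvd_unit hd hCu)
    rcases hπ.dvd_mul.mp hd with hd | hd
    · -- π ∣ X 0
      have hE := hzero _ (hdvd_p _ prime_X0.irreducible hd) ![0, 1] (by simp)
      simp [pPoly] at hE
      have h' : a * b * (b ^ 2 - a ^ 2) = 0 := by linear_combination hE
      exact mul_ne_zero (mul_ne_zero ha hb)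
        (fun h => hab (by linear_combination -h)) h'
    rcases hπ.dvd_mul.mp hd with hd | hd
    · -- π ∣ X 1
      have hE := hzero _ (hdvd_p _ prime_X1.irreducible hd) ![1, 0] (by simp)
      simp [pPoly] at hE
      have h' : a * c * (c ^ 2 - a ^ 2) = 0 := by linear_combination -hE
      exact mul_ne_zero (mul_ne_zero ha hc) hca h'
    rcases hπ.dvd_mul.mp hd with hd | hd
    · -- π ∣ X 0 - X 1
      have hE := hzero _ (hdvd_p _ prime_sub.irreducible hd) ![1, 1] (by simp)
      simp [pPoly] at hE
      have h' : a * (b - c) * ((a - b + c) * (a + b - c)) = 0 := by linear_combination -hE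
      have hbc' : b - c ≠ 0 := fun h => hbc (by linear_combination (b + c) * h)
      exact mul_ne_zero (mul_ne_zero ha hbc') (mul_ne_zero h3 h2) h'
    · -- π ∣ X 0 + X 1
      have hE := hzero _ (hdvd_p _ prime_add.irreducible hd) ![1, -1] (by simp)
      simp [pPoly] at hE
      have h' : a * (b + c) * ((a + b + c) * (a - b - c)) = 0 := by linear_combination hE
      have hbc' : b + c ≠ 0 := fun h => hbc (by linear_combination (b - c) * h)
      exact mul_ne_zero (mul_ne_zero ha hbc') (mul_ne_zero h1 h4) h'
  have hlin : Irreducible (Polynomial.C (pPoly a b c) * Polynomial.X + Polynomial.C (qPoly a)) :=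
    linear_irred hp0 H
  have h5 : Irreducible ((substEquiv a b c ha) (unexpQuartic a b c)) := by
    refine (MulEquiv.irreducible_iff (finSuccEquiv ℂ 2)).mp ?_
    rw [substEquiv_apply, key_eq]
    exact hlin
  exact (MulEquiv.irreducible_iff (substEquiv a b c ha)).mp h5

/-- The unexpected quartic of the B₃ configuration at a general point (a:b:c)
is irreducible: there is a nonzero polynomial h in a, b, c such that whenever
h(a,b,c) ≠ 0, the quartic f_{(a,b,c)} is irreducible in ℂ[x,y,z]. -/
theorem unexpected_quartic_irreducible :
    ∃ h : MvPolynomial (Fin 3) ℂ, h ≠ 0 ∧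
      ∀ a b c : ℂ, eval ![a, b, c] h ≠ 0 → Irreducible (unexpQuartic a b c) := by
  refine ⟨X 0 * X 1 * X 2 * (X 0 ^ 2 - X 1 ^ 2) * (X 1 ^ 2 - X 2 ^ 2) * (X 2 ^ 2 - X 0 ^ 2)
    * (X 0 + X 1 + X 2) * (X 0 + X 1 - X 2) * (X 0 - X 1 + X 2) * (X 0 - X 1 - X 2), ?_, ?_⟩
  · intro h
    have := congrArg (eval ![(1 : ℂ), 2, 4]) h
    simp at this
    norm_num at this
  · intro a b c hh
    simp only [map_mul, map_add, map_sub, map_pow, eval_X, Matrix.cons_val_zero,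
      Matrix.cons_val_one, Matrix.head_cons, Matrix.cons_val_succ, Matrix.cons_val_two,
      Matrix.tail_cons, Fin.isValue, mul_ne_zero_iff] at hh
    obtain ⟨⟨⟨⟨⟨⟨⟨⟨⟨ha, hb⟩, hc⟩, hab⟩, hbc⟩, hca⟩, h1⟩, h2⟩, h3⟩, h4⟩ := hh
    exact key_irred a b c ha hb hc hab hbc hca h1 h2 h3 h4
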